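/- Let V be a quadratic or bilinear R-module with unique base. Then every isometry σ ∈ O(V) satisfies σ(V_λ) = V_λ for each type λ, and the restriction maps give a group isomorphism O(V) ≅ Π_{λ∈Λ'} O(V_λ). -/

import Mathlib

universe u

/-- `B` is a base of the `R`-module `V`. -/
def IsBaseSet (R : Type*) [CommSemiring R] {V : Type*} [AddCommMonoid V] [Module R V]
    (B : Set V) : Prop :=
  ∀ x : V, ∃! c : B →₀ R, x = c.sum fun b r => r • (b : V)

/-- `V` is the internal direct sum of the family of submodules `W i`. -/
def IsInternalSum {R : Type*} [CommSemiring R] {V : Type*} [AddCommMonoid V] [Module R V]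
    {ι : Type*} (W : ι → Submodule R V) : Prop :=
  ∀ x : V, ∃! c : ι →₀ V, (∀ i, c i ∈ W i) ∧ x = c.sum fun _ v => v

/-- A quadratic `R`-module datum: a carrier with a quadratic form and a chosen base. -/
structure QMod (R : Type u) [CommSemiring R] where
  carrier : Type u
  [acm : AddCommMonoid carrier]
  [mod : Module R carrier]
  q : carrier → R
  base : Set carrier

attribute [instance] QMod.acm QMod.mod

namespace QMod
variable {R : Type u} [CommSemiring R]

/-- quasilinearity of the form of `M` on `S × T`. -/
def Qlin (M : QMod R) (S T : Set M.carrier) : Prop :=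
  ∀ x ∈ S, ∀ y ∈ T, M.q (x + y) = M.q x + M.q y

/-- `M` is a quadratic module (its form admits a symmetric bilinear companion) whose
chosen base is a base, and `M` has unique base. -/
def Good (M : QMod R) : Prop :=
  (∀ (a : R) (x : M.carrier), M.q (a • x) = a * a * M.q x) ∧
  (∃ b : M.carrier →ₗ[R] M.carrier →ₗ[R] R,
      (∀ x y, b x y = b y x) ∧ ∀ x y, M.q (x + y) = M.q x + M.q y + b x y) ∧
  IsBaseSet R M.base ∧
  (∀ B' : Set M.carrier, IsBaseSet R B' →
    ∀ v ∈ B', ∃ u : Rˣ, ∃ w ∈ M.base, v = (u : R) • w)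

/-- `W₁` is disjointly orthogonal to `W₂` in `M`. -/
def DisjOrth (M : QMod R) (W₁ W₂ : Submodule R M.carrier) : Prop :=
  W₁ ⊓ W₂ = ⊥ ∧ M.Qlin (W₁ : Set M.carrier) (W₂ : Set M.carrier)

/-- Two distinct base vectors are joined by an edge iff `q` is not quasilinear on the
pair of lines they span (equivalently, any quasiminimal companion is nonzero on them). -/
def edge (M : QMod R) (x y : M.carrier) : Prop :=
  x ∈ M.base ∧ y ∈ M.base ∧ x ≠ y ∧
    ¬ M.Qlin (Submodule.span R {x} : Submodule R M.carrier)
        (Submodule.span R {y} : Submodule R M.carrier)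

/-- The equivalence class of the base vector `x` under chains of edges. -/
def comp (M : QMod R) (x : M.carrier) : Set M.carrier :=
  {y ∈ M.base | x = y ∨ Relation.TransGen M.edge x y}

/-- The bases of the indecomposable components of `M`. -/
def comps (M : QMod R) : Set (Set M.carrier) := {C | ∃ x ∈ M.base, C = M.comp x}

/-- Isometry of quadratic modules. -/
def Isom (M N : QMod R) : Prop :=
  ∃ e : M.carrier ≃ₗ[R] N.carrier, ∀ x, N.q (e x) = M.q x

/-- `M` is indecomposable: no nontrivial disjoint orthogonal decomposition into
basic submodules. -/
def Indecomp (M : QMod R) : Prop :=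
  ¬ ∃ S₁ S₂ : Set M.carrier, S₁ ∪ S₂ = M.base ∧ Disjoint S₁ S₂ ∧ S₁.Nonempty ∧ S₂.Nonempty ∧
      M.DisjOrth (Submodule.span R S₁) (Submodule.span R S₂)

/-- The quadratic module carried by the basic submodule spanned by `C`. -/
def restrict (M : QMod R) (C : Set M.carrier) : QMod R where
  carrier := ↥(Submodule.span R C)
  q := fun x => M.q (x : M.carrier)
  base := {v : ↥(Submodule.span R C) | (v : M.carrier) ∈ C}

/-- The number (a cardinal) of indecomposable components of `M` isometric to `N`. -/
noncomputable def mult (M N : QMod R) : Cardinal :=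
  Cardinal.mk {C : Set M.carrier // C ∈ M.comps ∧ (M.restrict C).Isom N}

/-- External orthogonal sum `M ⊥ N` of two quadratic modules. -/
def orthSum (M N : QMod R) : QMod R where
  carrier := M.carrier × N.carrier
  q := fun p => M.q p.1 + N.q p.2
  base := (fun x => (x, (0 : N.carrier))) '' M.base ∪
    (fun y => ((0 : M.carrier), y)) '' N.base

/-- External orthogonal sum of `I`-many copies of `M`. -/
noncomputable def pow (M : QMod R) (I : Type u) : QMod R where
  carrier := I →₀ M.carrier
  q := fun f => f.sum fun _ x => M.q x
  base := {f | ∃ i, ∃ v ∈ M.base, f = Finsupp.single i v}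

end QMod

/-- A bilinear `R`-module datum: a carrier with a symmetric bilinear form and a base. -/
structure BMod (R : Type u) [CommSemiring R] where
  carrier : Type u
  [acm : AddCommMonoid carrier]
  [mod : Module R carrier]
  b : carrier → carrier → R
  base : Set carrier

attribute [instance] BMod.acm BMod.mod

namespace BMod
variable {R : Type u} [CommSemiring R]

/-- `M` is a bilinear module (`b` symmetric bilinear) whose chosen base is a base,
and `M` has unique base. -/
def Good (M : BMod R) : Prop :=
  (∀ x y, M.b x y = M.b y x) ∧
  (∀ x y z, M.b (x + y) z = M.b x z + M.b y z) ∧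
  (∀ (a : R) (x y : M.carrier), M.b (a • x) y = a * M.b x y) ∧
  IsBaseSet R M.base ∧
  (∀ B' : Set M.carrier, IsBaseSet R B' →
    ∀ v ∈ B', ∃ u : Rˣ, ∃ w ∈ M.base, v = (u : R) • w)

/-- `W₁` is disjointly orthogonal to `W₂` in `M`. -/
def DisjOrth (M : BMod R) (W₁ W₂ : Submodule R M.carrier) : Prop :=
  W₁ ⊓ W₂ = ⊥ ∧ ∀ x ∈ W₁, ∀ y ∈ W₂, M.b x y = 0

/-- Edges between distinct base vectors: nonzero `b_alt`-value. -/
def edge (M : BMod R) (x y : M.carrier) : Prop :=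
  x ∈ M.base ∧ y ∈ M.base ∧ x ≠ y ∧ M.b x y ≠ 0

/-- The equivalence class of the base vector `x` under chains of edges. -/
def comp (M : BMod R) (x : M.carrier) : Set M.carrier :=
  {y ∈ M.base | x = y ∨ Relation.TransGen M.edge x y}

/-- The bases of the indecomposable components of `M`. -/
def comps (M : BMod R) : Set (Set M.carrier) := {C | ∃ x ∈ M.base, C = M.comp x}

/-- Isometry of bilinear modules. -/
def Isom (M N : BMod R) : Prop :=
  ∃ e : M.carrier ≃ₗ[R] N.carrier, ∀ x y, N.b (e x) (e y) = M.b x y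

/-- `M` is indecomposable. -/
def Indecomp (M : BMod R) : Prop :=
  ¬ ∃ S₁ S₂ : Set M.carrier, S₁ ∪ S₂ = M.base ∧ Disjoint S₁ S₂ ∧ S₁.Nonempty ∧ S₂.Nonempty ∧
      M.DisjOrth (Submodule.span R S₁) (Submodule.span R S₂)

/-- The bilinear module carried by the basic submodule spanned by `C`. -/
def restrict (M : BMod R) (C : Set M.carrier) : BMod R where
  carrier := ↥(Submodule.span R C)
  b := fun x y => M.b (x : M.carrier) (y : M.carrier)
  base := {v : ↥(Submodule.span R C) | (v : M.carrier) ∈ C}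

/-- The number of indecomposable components of `M` isometric to `N`. -/
noncomputable def mult (M N : BMod R) : Cardinal :=
  Cardinal.mk {C : Set M.carrier // C ∈ M.comps ∧ (M.restrict C).Isom N}

/-- External orthogonal sum `M ⊥ N`. -/
def orthSum (M N : BMod R) : BMod R where
  carrier := M.carrier × N.carrier
  b := fun p p' => M.b p.1 p'.1 + N.b p.2 p'.2
  base := (fun x => (x, (0 : N.carrier))) '' M.base ∪
    (fun y => ((0 : M.carrier), y)) '' N.base

/-- External orthogonal sum of `I`-many copies of `M`. -/
noncomputable def pow (M : BMod R) (I : Type u) : BMod R where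
  carrier := I →₀ M.carrier
  b := fun f g => f.sum fun i x => M.b x (g i)
  base := {f | ∃ i, ∃ v ∈ M.base, f = Finsupp.single i v}

end BMod

namespace QMod
variable {R : Type u} [CommSemiring R]

/-- The orthogonal group of a quadratic module: all automorphisms preserving `q`. -/
def orthGroup (M : QMod R) : Subgroup (M.carrier ≃ₗ[R] M.carrier) where
  carrier := {e | ∀ x, M.q (e x) = M.q x}
  one_mem' := fun _ => rfl
  mul_mem' := by
    intro a b ha hb x
    have h : (a * b) x = a (b x) := rfl
    rw [h, ha, hb]
  inv_mem' := by
    intro a ha x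
    exact (ha ((a⁻¹ : _) x)).symm.trans (congrArg M.q (a.apply_symm_apply x))

/-- The quadratic module carried by a submodule `W`, with base the base vectors in `W`. -/
@[reducible] def restrictSub (M : QMod R) (W : Submodule R M.carrier) : QMod R where
  carrier := ↥W
  q := fun x => M.q (x : M.carrier)
  base := {v : ↥W | (v : M.carrier) ∈ M.base}

end QMod

namespace BMod
variable {R : Type u} [CommSemiring R]

/-- The orthogonal group of a bilinear module: all automorphisms preserving `b`. -/
def orthGroup (M : BMod R) : Subgroup (M.carrier ≃ₗ[R] M.carrier) where
  carrier := {e | ∀ x y, M.b (e x) (e y) = M.b x y}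
  one_mem' := fun _ _ => rfl
  mul_mem' := by
    intro a b ha hb x y
    have hx : (a * b) x = a (b x) := rfl
    have hy : (a * b) y = a (b y) := rfl
    rw [hx, hy, ha, hb]
  inv_mem' := by
    intro a ha x y
    have h := ha ((a⁻¹ : _) x) ((a⁻¹ : _) y)
    refine h.symm.trans ?_
    rw [show a ((a⁻¹ : _) x) = x from a.apply_symm_apply x,
      show a ((a⁻¹ : _) y) = y from a.apply_symm_apply y]

/-- The bilinear module carried by a submodule `W`, with base the base vectors in `W`. -/
@[reducible] def restrictSub (M : BMod R) (W : Submodule R M.carrier) : BMod R where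
  carrier := ↥W
  b := fun x y => M.b (x : M.carrier) (y : M.carrier)
  base := {v : ↥W | (v : M.carrier) ∈ M.base}

end BMod

/- ===================== Auxiliary development ===================== -/

section Absorb
variable {M : Type*} [AddCommMonoid M]

lemma absorb_of_absorb_add {t s r : M} (h : t + s = s) : t + (s + r) = s + r := by
  rw [← add_assoc, h]

lemma absorb_sum {ι : Type*} {s : Finset ι} {g : ι → M} {S : M}
    (h : ∀ i ∈ s, g i + S = S) : (∑ i ∈ s, g i) + S = S := by
  classical
  induction s using Finset.induction_on with
  | empty => simp
  | @insert a s ha ih =>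
      rw [Finset.sum_insert ha, add_assoc,
        ih (fun i hi => h i (Finset.mem_insert_of_mem hi)), h a (Finset.mem_insert_self a s)]

end Absorb

section BaseSet
variable {R : Type u} [CommSemiring R] {V : Type u} [AddCommMonoid V] [Module R V]
  {B : Set V}

/-- The linear combination map associated to a base set. -/
noncomputable def baseLC (R : Type u) [CommSemiring R] {V : Type u} [AddCommMonoid V]
    [Module R V] (B : Set V) : (B →₀ R) →ₗ[R] V :=
  Finsupp.linearCombination R (fun b => (b : V))

lemma baseLC_apply (c : B →₀ R) : baseLC R B c = c.sum fun b r => r • (b : V) :=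
  Finsupp.linearCombination_apply _ _

lemma IsBaseSet.bijective (hB : IsBaseSet R B) : Function.Bijective (baseLC R B) := by
  constructor
  · intro c c' h
    exact (hB (baseLC R B c)).unique (baseLC_apply c) (h.trans (baseLC_apply c'))
  · intro x
    obtain ⟨c, hc, -⟩ := hB x
    exact ⟨c, ((baseLC_apply c).trans hc.symm)⟩

/-- The linear equivalence `(B →₀ R) ≃ₗ[R] V` for a base set `B`. -/
noncomputable def IsBaseSet.equiv (hB : IsBaseSet R B) : (B →₀ R) ≃ₗ[R] V :=
  LinearEquiv.ofBijective (baseLC R B) hB.bijective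

lemma IsBaseSet.equiv_apply (hB : IsBaseSet R B) (c : B →₀ R) :
    hB.equiv c = c.sum fun b r => r • (b : V) := baseLC_apply c

lemma IsBaseSet.coords_eq (hB : IsBaseSet R B) {x : V} {c : B →₀ R}
    (h : x = c.sum fun b r => r • (b : V)) : hB.equiv.symm x = c := by
  have : hB.equiv c = x := (hB.equiv_apply c).trans h.symm
  rw [← this, LinearEquiv.symm_apply_apply]

lemma IsBaseSet.coords_base (hB : IsBaseSet R B) {b : V} (hb : b ∈ B) :
    hB.equiv.symm b = Finsupp.single ⟨b, hb⟩ 1 := by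
  refine hB.coords_eq ?_
  rw [Finsupp.sum_single_index (by simp), one_smul]

lemma IsBaseSet.span_eq_top (hB : IsBaseSet R B) : Submodule.span R B = ⊤ := by
  rw [eq_top_iff]
  intro x _
  obtain ⟨c, hc, -⟩ := hB x
  rw [hc]
  exact Submodule.sum_mem _ fun b _ =>
    Submodule.smul_mem _ _ (Submodule.subset_span b.2)

lemma IsBaseSet.base_ne_zero [Nontrivial R] (hB : IsBaseSet R B) {b : V} (hb : b ∈ B) :
    b ≠ 0 := by
  intro h
  subst h
  have h1 : hB.equiv.symm (0 : V) = Finsupp.single ⟨0, hb⟩ 1 := hB.coords_base hb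
  rw [map_zero] at h1
  exact one_ne_zero (Finsupp.single_eq_zero.mp h1.symm)

lemma IsBaseSet.eq_of_smul [Nontrivial R] (hB : IsBaseSet R B) {b b' : V} (hb : b ∈ B)
    (hb' : b' ∈ B) {a : R} (h : b' = a • b) : b' = b := by
  by_contra hne
  have h1 : hB.equiv.symm b' = Finsupp.single ⟨b', hb'⟩ 1 := hB.coords_base hb'
  have h2 : hB.equiv.symm b' = Finsupp.single ⟨b, hb⟩ a := by
    rw [h, map_smul, hB.coords_base hb, Finsupp.smul_single, smul_eq_mul, mul_one]
  have h3 : (Finsupp.single (⟨b', hb'⟩ : B) (1 : R)) ⟨b', hb'⟩ =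
      (Finsupp.single (⟨b, hb⟩ : B) a) ⟨b', hb'⟩ := by
    rw [← h1, h2]
  rw [Finsupp.single_eq_same,
    Finsupp.single_eq_of_ne' (fun hh => hne (congrArg Subtype.val hh).symm)] at h3
  exact one_ne_zero h3

lemma IsBaseSet.unit_smul_inj [Nontrivial R] (hB : IsBaseSet R B) {u u' : Rˣ} {w w' : V}
    (hw : w ∈ B) (hw' : w' ∈ B) (h : (u : R) • w = (u' : R) • w') : w' = w := by
  have : w' = ((u'⁻¹ : Rˣ) : R) • ((u' : R) • w') := by
    rw [smul_smul, Units.inv_mul, one_smul]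
  rw [← h, smul_smul] at this
  exact hB.eq_of_smul hw hw' this

lemma IsBaseSet.image (hB : IsBaseSet R B) (σ : V ≃ₗ[R] V) : IsBaseSet R (σ '' B) := by
  classical
  intro x
  set e : B ≃ ↥(σ '' B) := Equiv.Set.image σ B σ.injective with he
  obtain ⟨c, hc, hu⟩ := hB (σ.symm x)
  have key : ∀ c' : B →₀ R,
      (Finsupp.equivMapDomain e c').sum (fun b r => r • (b : V)) =
        σ (c'.sum fun b r => r • (b : V)) := by
    intro c'
    rw [Finsupp.sum_equivMapDomain, map_finsuppSum]
    refine Finsupp.sum_congr fun b _ => ?_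
    rw [map_smul]
    rfl
  have round : ∀ c'' : ↥(σ '' B) →₀ R,
      Finsupp.equivMapDomain e (Finsupp.equivMapDomain e.symm c'') = c'' := by
    intro c''
    ext b'
    simp [Finsupp.equivMapDomain_apply]
  refine ⟨Finsupp.equivMapDomain e c, ?_, ?_⟩
  · show x = (Finsupp.equivMapDomain e c).sum fun b r => r • (b : V)
    rw [key, ← hc, σ.apply_symm_apply]
  · intro c'' h''
    replace h'' : x = c''.sum fun b r => r • (b : V) := h''
    have hcc : c = Finsupp.equivMapDomain e.symm c'' := by
      refine (hu _ ?_).symm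
      show σ.symm x = _
      have h3 := key (Finsupp.equivMapDomain e.symm c'')
      rw [round c''] at h3
      rw [← h''] at h3
      rw [h3, LinearEquiv.symm_apply_apply]
    rw [hcc, round c'']

end BaseSet

section CompSet
variable {V : Type u}

/-- Generic component set of `x` under the edge relation `E` inside `B`. -/
def compSet (B : Set V) (E : V → V → Prop) (x : V) : Set V :=
  {y ∈ B | x = y ∨ Relation.TransGen E x y}

variable {B : Set V} {E : V → V → Prop}

lemma mem_compSet_self {x : V} (hx : x ∈ B) : x ∈ compSet B E x := ⟨hx, Or.inl rfl⟩

lemma transGen_symm (hsym : ∀ a b, E a b → E b a) {x y : V}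
    (h : Relation.TransGen E x y) : Relation.TransGen E y x := by
  induction h with
  | single h => exact Relation.TransGen.single (hsym _ _ h)
  | tail _ h ih => exact Relation.TransGen.head (hsym _ _ h) ih

lemma mem_compSet_comm (hsym : ∀ a b, E a b → E b a) {x y : V} (hx : x ∈ B) (hy : y ∈ B) :
    y ∈ compSet B E x ↔ x ∈ compSet B E y := by
  constructor <;> intro h <;>
    exact ⟨‹_ ∈ B›, h.2.imp Eq.symm (transGen_symm hsym)⟩

lemma compSet_eq_of_mem (hsym : ∀ a b, E a b → E b a) {x y : V} (hy : y ∈ compSet B E x) :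
    compSet B E y = compSet B E x := by
  ext z
  simp only [compSet, Set.mem_setOf_eq, Set.mem_sep_iff]
  refine and_congr_right fun hz => ?_
  rcases hy.2 with rfl | hchain
  · rfl
  · constructor
    · rintro (rfl | h)
      · exact Or.inr hchain
      · exact Or.inr (hchain.trans h)
    · rintro (rfl | h)
      · exact Or.inr (transGen_symm hsym hchain)
      · exact Or.inr ((transGen_symm hsym hchain).trans h)

end CompSet


section UnitSmul
variable {R : Type u} [CommSemiring R] {V : Type u} [AddCommMonoid V] [Module R V]

lemma span_unit_smul (u : Rˣ) (w : V) :
    Submodule.span R {(u : R) • w} = Submodule.span R {w} := by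
  apply le_antisymm
  · rw [Submodule.span_le, Set.singleton_subset_iff]
    exact Submodule.smul_mem _ _ (Submodule.subset_span rfl)
  · rw [Submodule.span_le, Set.singleton_subset_iff]
    have hw : ((u⁻¹ : Rˣ) : R) • ((u : R) • w) ∈ Submodule.span R {(u : R) • w} :=
      Submodule.smul_mem _ _ (Submodule.subset_span rfl)
    rwa [smul_smul, Units.inv_mul, one_smul] at hw

end UnitSmul

namespace QMod
variable {R : Type u} [CommSemiring R] {M N P : QMod R}

lemma Isom.symm (h : M.Isom N) : N.Isom M := by
  obtain ⟨e, he⟩ := h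
  exact ⟨e.symm, fun x => (he _).symm.trans (congrArg N.q (e.apply_symm_apply x))⟩

lemma Isom.trans (h1 : M.Isom N) (h2 : N.Isom P) : M.Isom P := by
  obtain ⟨e1, he1⟩ := h1
  obtain ⟨e2, he2⟩ := h2
  exact ⟨e1.trans e2, fun x => (he2 _).trans (he1 x)⟩

lemma edge_symm {x y : M.carrier} (h : M.edge x y) : M.edge y x := by
  obtain ⟨hx, hy, hne, hq⟩ := h
  refine ⟨hy, hx, hne.symm, fun hq' => hq fun p hp r hr => ?_⟩
  rw [add_comm p r, hq' r hr p hp, add_comm]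

lemma q_zero (hG : M.Good) : M.q 0 = 0 := by
  have := hG.1 0 0
  rwa [zero_smul, zero_mul, zero_mul] at this

lemma qlin_span (hG : M.Good) {P Q : Set M.carrier}
    (h : ∀ e ∈ P, ∀ f ∈ Q, ∀ a c : R, M.q (a • e + c • f) = M.q (a • e) + M.q (c • f)) :
    ∀ x ∈ Submodule.span R P, ∀ y ∈ Submodule.span R Q, M.q (x + y) = M.q x + M.q y := by
  classical
  obtain ⟨bil, hbsym, hbq⟩ := hG.2.1
  intro x hx y hy
  obtain ⟨cx, hcxs, hcx⟩ := Submodule.mem_span_set.mp hx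
  obtain ⟨cy, hcys, hcy⟩ := Submodule.mem_span_set.mp hy
  have hxe : x = ∑ e ∈ cx.support, cx e • e := by rw [← hcx]; rfl
  have hye : y = ∑ f ∈ cy.support, cy f • f := by rw [← hcy]; rfl
  have habs0 : ∀ e ∈ cx.support, ∀ f ∈ cy.support,
      bil (cx e • e) (cy f • f) + (M.q x + M.q y) = M.q x + M.q y := by
    intro e he f hf
    have hqx : M.q x = M.q (cx e • e) + (M.q (∑ e' ∈ cx.support.erase e, cx e' • e') +
        bil (cx e • e) (∑ e' ∈ cx.support.erase e, cx e' • e')) := by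
      rw [hxe, ← Finset.add_sum_erase _ _ he, hbq, add_assoc]
    have hqy : M.q y = M.q (cy f • f) + (M.q (∑ f' ∈ cy.support.erase f, cy f' • f') +
        bil (cy f • f) (∑ f' ∈ cy.support.erase f, cy f' • f')) := by
      rw [hye, ← Finset.add_sum_erase _ _ hf, hbq, add_assoc]
    have h0 : bil (cx e • e) (cy f • f) + (M.q (cx e • e) + M.q (cy f • f)) =
        M.q (cx e • e) + M.q (cy f • f) := by
      have h1 := h e (hcxs he) f (hcys hf) (cx e) (cy f)
      rw [hbq] at h1
      rw [add_comm]
      exact h1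
    rw [hqx, hqy]
    set A := M.q (cx e • e) with hA
    set B := M.q (cy f • f) with hB
    set T := bil (cx e • e) (cy f • f) with hT
    set Rx := M.q (∑ e' ∈ cx.support.erase e, cx e' • e') +
        bil (cx e • e) (∑ e' ∈ cx.support.erase e, cx e' • e') with hRx
    set Ry := M.q (∑ f' ∈ cy.support.erase f, cy f' • f') +
        bil (cy f • f) (∑ f' ∈ cy.support.erase f, cy f' • f') with hRy
    calc T + (A + Rx + (B + Ry)) = T + (A + B) + (Rx + Ry) := by ring
    _ = A + B + (Rx + Ry) := by rw [h0]
    _ = A + Rx + (B + Ry) := by ring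
  have hbilxy : bil x y = ∑ e ∈ cx.support, ∑ f ∈ cy.support,
      bil (cx e • e) (cy f • f) := by
    rw [hxe, hye,
      show (bil (∑ e ∈ cx.support, cx e • e)) = ∑ e ∈ cx.support, bil (cx e • e) from
        map_sum _ _ _,
      LinearMap.sum_apply]
    exact Finset.sum_congr rfl fun e _ => map_sum _ _ _
  have habs : bil x y + (M.q x + M.q y) = M.q x + M.q y := by
    rw [hbilxy]
    exact absorb_sum fun e he => absorb_sum fun f hf => habs0 e he f hf
  rw [hbq, add_comm (M.q x + M.q y) (bil x y), habs]

lemma isom_restrict_of_map {V : QMod R} (τ : V.carrier ≃ₗ[R] V.carrier)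
    (hτ : ∀ x, V.q (τ x) = V.q x) {C C' : Set V.carrier}
    (h : Submodule.map τ.toLinearMap (Submodule.span R C) = Submodule.span R C') :
    (V.restrict C).Isom (V.restrict C') := by
  refine ⟨(τ.submoduleMap (Submodule.span R C)).trans (LinearEquiv.ofEq _ _ h), fun x => ?_⟩
  exact hτ _

end QMod

section QModMain
variable {R : Type u} [CommSemiring R]

set_option maxHeartbeats 2000000 in
theorem qmod_key (V : QMod R) (hG : V.Good)
    (Λ : Type u) (rep : Λ → QMod R)
    (hrepG : ∀ l, (rep l).Good ∧ (rep l).Indecomp)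
    (hrepinj : ∀ l m, (rep l).Isom (rep m) → l = m)
    (hcompt : ∀ C ∈ V.comps, ∃ l, (V.restrict C).Isom (rep l))
    (Vl : Λ → Submodule R V.carrier)
    (hVl : ∀ l, Vl l =
      Submodule.span R (⋃₀ {C | C ∈ V.comps ∧ (V.restrict C).Isom (rep l)})) :
    (∀ σ : V.carrier ≃ₗ[R] V.carrier, (∀ x, V.q (σ x) = V.q x) →
      ∀ l, Submodule.map σ.toLinearMap (Vl l) = Vl l) ∧
    ∃ φ : V.orthGroup ≃*
        ((l : {l : Λ // Vl l ≠ ⊥}) → (V.restrictSub (Vl l.1)).orthGroup),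
      ∀ (σ : V.orthGroup) (l : {l : Λ // Vl l ≠ ⊥}) (x : V.carrier) (hx : x ∈ Vl l.1),
        (((φ σ l :
            (V.restrictSub (Vl l.1)).carrier ≃ₗ[R] (V.restrictSub (Vl l.1)).carrier)
              ⟨x, hx⟩ : V.carrier) =
          (σ : V.carrier ≃ₗ[R] V.carrier) x) := by
  classical
  rcases subsingleton_or_nontrivial V.carrier with hss | hnt
  · have hsubm : ∀ p q : Submodule R V.carrier, p = q := by
      intro p q; ext x; rw [Subsingleton.elim x 0]; simp
    haveI : Subsingleton (V.carrier ≃ₗ[R] V.carrier) :=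
      ⟨fun f g => LinearEquiv.ext fun x => Subsingleton.elim _ _⟩
    haveI hLempty : IsEmpty {l : Λ // Vl l ≠ ⊥} := ⟨fun l => l.2 (hsubm _ _)⟩
    refine ⟨fun σ _ l => hsubm _ _, ?_⟩
    exact ⟨MulEquiv.mk (equivOfSubsingletonOfSubsingleton (fun _ => 1) (fun _ => 1))
      (fun _ _ => Subsingleton.elim _ _), fun σ l _ _ => Subsingleton.elim _ _⟩
  haveI : Nontrivial R := by
    rcases subsingleton_or_nontrivial R with h | h
    · exact absurd (Module.subsingleton R V.carrier) (not_subsingleton_iff_nontrivial.mpr hnt)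
    · exact h
  have hBase : IsBaseSet R V.base := hG.2.2.1
  have hUB := hG.2.2.2
  have q0 : V.q 0 = 0 := QMod.q_zero hG
  have hedgesym : ∀ a b : V.carrier, V.edge a b → V.edge b a := fun a b h => QMod.edge_symm h
  have hmemself : ∀ x ∈ V.base, x ∈ V.comp x := fun x hx => mem_compSet_self hx
  have hcompeq : ∀ x y : V.carrier, y ∈ V.comp x → V.comp y = V.comp x :=
    fun x y h => compSet_eq_of_mem hedgesym h
  set typeSet : Λ → Set V.carrier :=
    fun l => {x | x ∈ V.base ∧ (V.restrict (V.comp x)).Isom (rep l)} with htypeSet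
  have hspanT : ∀ l, Vl l = Submodule.span R (typeSet l) := by
    intro l
    rw [hVl l]
    apply le_antisymm
    · refine Submodule.span_le.2 ?_
      rintro x ⟨C, ⟨⟨z, hz, rfl⟩, hiso⟩, hxC⟩
      refine Submodule.subset_span ⟨hxC.1, ?_⟩
      rw [hcompeq z x hxC]
      exact hiso
    · refine Submodule.span_mono ?_
      rintro x ⟨hxB, hiso⟩
      exact ⟨V.comp x, ⟨⟨x, hxB, rfl⟩, hiso⟩, hmemself x hxB⟩
  have htuniq : ∀ x : V.carrier, ∀ l m : Λ, x ∈ typeSet l → x ∈ typeSet m → l = m :=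
    fun x l m h1 h2 => hrepinj l m (QMod.Isom.trans (QMod.Isom.symm h1.2) h2.2)
  have hcross : ∀ {l m : Λ}, l ≠ m → ∀ e ∈ typeSet l, ∀ f ∈ typeSet m,
      ¬ V.edge e f ∧ e ≠ f := by
    intro l m hne e he f hf
    have hef : e ≠ f := fun h => hne (htuniq e l m he (h ▸ hf))
    refine ⟨fun hedge => ?_, hef⟩
    have hfc : f ∈ V.comp e := ⟨hedge.2.1, Or.inr (Relation.TransGen.single hedge)⟩
    have hiso' : (V.restrict (V.comp f)).Isom (rep l) := by
      rw [hcompeq e f hfc]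
      exact he.2
    exact hne (htuniq f l m ⟨hedge.2.1, hiso'⟩ hf)
  have hcrossq : ∀ {l m : Λ}, l ≠ m → ∀ e ∈ typeSet l, ∀ f ∈ typeSet m, ∀ a c : R,
      V.q (a • e + c • f) = V.q (a • e) + V.q (c • f) := by
    intro l m hne e he f hf a c
    obtain ⟨hnedge, hef⟩ := hcross hne e he f hf
    have hQ : V.Qlin (Submodule.span R {e} : Submodule R V.carrier)
        (Submodule.span R {f} : Submodule R V.carrier) := by
      by_contra hq
      exact hnedge ⟨he.1, hf.1, hef, hq⟩
    exact hQ (a • e) (Submodule.smul_mem _ _ (Submodule.subset_span rfl))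
      (c • f) (Submodule.smul_mem _ _ (Submodule.subset_span rfl))
  -- isometry of the inverse
  have hiso_symm : ∀ (τ : V.carrier ≃ₗ[R] V.carrier), (∀ x, V.q (τ x) = V.q x) →
      ∀ x, V.q (τ.symm x) = V.q x := by
    intro τ hτ x
    conv_rhs => rw [← τ.apply_symm_apply x]
    rw [hτ]
  -- Qlin transfer along isometries
  have hqlinmap : ∀ (τ : V.carrier ≃ₗ[R] V.carrier), (∀ x, V.q (τ x) = V.q x) →
      ∀ p p' : V.carrier,
      V.Qlin (Submodule.span R {p} : Submodule R V.carrier)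
        (Submodule.span R {p'} : Submodule R V.carrier) →
      V.Qlin (Submodule.span R {τ p} : Submodule R V.carrier)
        (Submodule.span R {τ p'} : Submodule R V.carrier) := by
    intro τ hτ p p' hQ x hx y hy
    obtain ⟨a, rfl⟩ := Submodule.mem_span_singleton.mp hx
    obtain ⟨c, rfl⟩ := Submodule.mem_span_singleton.mp hy
    rw [← map_smul, ← map_smul, ← map_add, hτ, hτ, hτ]
    exact hQ _ (Submodule.smul_mem _ _ (Submodule.subset_span rfl))
      _ (Submodule.smul_mem _ _ (Submodule.subset_span rfl))
  -- edge transfer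
  have hedgemap : ∀ (τ : V.carrier ≃ₗ[R] V.carrier) (_ : ∀ x, V.q (τ x) = V.q x),
      ∀ b b' : V.carrier, V.edge b b' →
      ∀ (u u' : Rˣ) (w w' : V.carrier), w ∈ V.base → w' ∈ V.base →
      τ b = (u : R) • w → τ b' = (u' : R) • w' → V.edge w w' := by
    intro τ hτ b b' hedge u u' w w' hwB hw'B hbw hb'w'
    have hne : w ≠ w' := by
      rintro rfl
      have hsm : b' = ((u' : R) * ((u⁻¹ : Rˣ) : R)) • b := by
        apply τ.injective
        rw [map_smul, hbw, hb'w', smul_smul, mul_assoc, Units.inv_mul, mul_one]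
      exact hedge.2.2.1 (hBase.eq_of_smul hedge.1 hedge.2.1 hsm).symm
    refine ⟨hwB, hw'B, hne, fun hq => hedge.2.2.2.elim ?_⟩
    have h1 : V.Qlin (Submodule.span R {τ b} : Submodule R V.carrier)
        (Submodule.span R {τ b'} : Submodule R V.carrier) := by
      rw [hbw, hb'w', span_unit_smul, span_unit_smul]
      exact hq
    have h2 := hqlinmap τ.symm (hiso_symm τ hτ) _ _ h1
    rwa [τ.symm_apply_apply, τ.symm_apply_apply] at h2
  -- transport along components
  have htrans : ∀ (τ : V.carrier ≃ₗ[R] V.carrier) (_ : ∀ x, V.q (τ x) = V.q x),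
      ∀ b ∈ V.base, ∀ (u : Rˣ), ∀ w ∈ V.base, τ b = (u : R) • w →
      ∀ y ∈ V.comp b, ∃ (u' : Rˣ) (w' : V.carrier), w' ∈ V.comp w ∧ τ y = (u' : R) • w' := by
    intro τ hτ b hb u w hwB hbw y hy
    obtain ⟨hyB, hcase⟩ := hy
    rcases hcase with rfl | hchain
    · exact ⟨u, w, hmemself w hwB, hbw⟩
    · have key : ∀ z : V.carrier, Relation.TransGen V.edge b z →
          ∃ (u' : Rˣ) (w' : V.carrier), w' ∈ V.base ∧
            (w = w' ∨ Relation.TransGen V.edge w w') ∧ τ z = (u' : R) • w' := by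
        intro z hchain
        induction hchain with
        | single h =>
          obtain ⟨u₂, w₂, hw₂B, hτz⟩ := hUB _ (hBase.image τ) _ ⟨_, h.2.1, rfl⟩
          have he2 : V.edge w w₂ := hedgemap τ hτ _ _ h u u₂ w w₂ hwB hw₂B hbw hτz
          exact ⟨u₂, w₂, hw₂B, Or.inr (Relation.TransGen.single he2), hτz⟩
        | @tail y₁ y₂ hby hstep ih =>
          obtain ⟨u₂, w₂, hw₂B, hch, hτy₁⟩ := ih
          obtain ⟨u₃, w₃, hw₃B, hτy₂⟩ := hUB _ (hBase.image τ) _ ⟨_, hstep.2.1, rfl⟩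
          have he23 : V.edge w₂ w₃ :=
            hedgemap τ hτ _ _ hstep u₂ u₃ w₂ w₃ hw₂B hw₃B hτy₁ hτy₂
          refine ⟨u₃, w₃, hw₃B, ?_, hτy₂⟩
          rcases hch with rfl | hch
          · exact Or.inr (Relation.TransGen.single he23)
          · exact Or.inr (hch.tail he23)
      obtain ⟨u', w', hw'B, hch, hτy⟩ := key y hchain
      exact ⟨u', w', ⟨hw'B, hch⟩, hτy⟩
  -- map of component spans
  have hmapcomp : ∀ (τ : V.carrier ≃ₗ[R] V.carrier) (_ : ∀ x, V.q (τ x) = V.q x),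
      ∀ e ∈ V.base, ∀ (u : Rˣ), ∀ w ∈ V.base, τ e = (u : R) • w →
      Submodule.map τ.toLinearMap (Submodule.span R (V.comp e)) =
        Submodule.span R (V.comp w) := by
    intro τ hτ e heB u w hwB hew
    apply le_antisymm
    · rw [Submodule.map_span]
      refine Submodule.span_le.2 ?_
      rintro _ ⟨y, hy, rfl⟩
      obtain ⟨u', w', hw', hτy⟩ := htrans τ hτ e heB u w hwB hew y hy
      show τ y ∈ Submodule.span R (V.comp w)
      rw [hτy]
      exact Submodule.smul_mem _ _ (Submodule.subset_span hw')
    · refine Submodule.span_le.2 ?_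
      intro y hy
      have hwe : τ.symm w = ((u⁻¹ : Rˣ) : R) • e := by
        apply τ.injective
        rw [τ.apply_symm_apply, map_smul, hew, smul_smul, Units.inv_mul, one_smul]
      obtain ⟨u', w', hw', hτy⟩ :=
        htrans τ.symm (hiso_symm τ hτ) w hwB u⁻¹ e heB hwe y hy
      show y ∈ Submodule.map τ.toLinearMap (Submodule.span R (V.comp e))
      refine Submodule.mem_map.mpr ⟨τ.symm y, ?_, τ.apply_symm_apply y⟩
      rw [hτy]
      exact Submodule.smul_mem _ _ (Submodule.subset_span hw')
  -- Part A
  have hsub : ∀ (τ : V.carrier ≃ₗ[R] V.carrier) (_ : ∀ x, V.q (τ x) = V.q x),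
      ∀ l, Submodule.map τ.toLinearMap (Vl l) ≤ Vl l := by
    intro τ hτ l
    rw [hspanT l, Submodule.map_span]
    refine Submodule.span_le.2 ?_
    rintro _ ⟨e, ⟨heB, hiso⟩, rfl⟩
    obtain ⟨u, w, hwB, hew⟩ := hUB _ (hBase.image τ) _ ⟨e, heB, rfl⟩
    have hmapc := hmapcomp τ hτ e heB u w hwB hew
    have hisoCC : (V.restrict (V.comp e)).Isom (V.restrict (V.comp w)) :=
      QMod.isom_restrict_of_map τ hτ hmapc
    have hwT : w ∈ typeSet l := ⟨hwB, QMod.Isom.trans (QMod.Isom.symm hisoCC) hiso⟩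
    show τ e ∈ Submodule.span R (typeSet l)
    rw [hew]
    exact Submodule.smul_mem _ _ (Submodule.subset_span hwT)
  have hA : ∀ σ : V.carrier ≃ₗ[R] V.carrier, (∀ x, V.q (σ x) = V.q x) →
      ∀ l, Submodule.map σ.toLinearMap (Vl l) = Vl l := by
    intro σ hσ l
    refine le_antisymm (hsub σ hσ l) fun x hx => ?_
    have h1 : σ.symm x ∈ Vl l :=
      hsub σ.symm (hiso_symm σ hσ) l (Submodule.mem_map.mpr ⟨x, hx, rfl⟩)
    exact Submodule.mem_map.mpr ⟨σ.symm x, h1, σ.apply_symm_apply x⟩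
  refine ⟨hA, ?_⟩
  -- Part B
  have hmemiff : ∀ σ : V.orthGroup, ∀ x, V.q ((σ : V.carrier ≃ₗ[R] V.carrier) x) = V.q x :=
    fun σ => σ.2
  let resE : V.orthGroup → ∀ l : {l : Λ // Vl l ≠ ⊥}, ↥(Vl l.1) ≃ₗ[R] ↥(Vl l.1) :=
    fun σ l => ((σ : V.carrier ≃ₗ[R] V.carrier).submoduleMap (Vl l.1)).trans
      (LinearEquiv.ofEq _ _ (hA _ (hmemiff σ) l.1))
  have hresE_coe : ∀ (σ : V.orthGroup) (l : {l : Λ // Vl l ≠ ⊥}) (v : ↥(Vl l.1)),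
      ((resE σ l v : ↥(Vl l.1)) : V.carrier) = (σ : V.carrier ≃ₗ[R] V.carrier) v :=
    fun σ l v => rfl
  have hresE_mem : ∀ (σ : V.orthGroup) (l : {l : Λ // Vl l ≠ ⊥}),
      resE σ l ∈ (V.restrictSub (Vl l.1)).orthGroup := by
    intro σ l
    have : ∀ v : ↥(Vl l.1),
        V.q ((resE σ l v : ↥(Vl l.1)) : V.carrier) = V.q (v : V.carrier) := by
      intro v
      rw [hresE_coe]
      exact hmemiff σ v
    exact this
  let Φ : V.orthGroup →*
      ((l : {l : Λ // Vl l ≠ ⊥}) → (V.restrictSub (Vl l.1)).orthGroup) :=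
    { toFun := fun σ l => ⟨resE σ l, hresE_mem σ l⟩,
      map_one' := by
        funext l
        refine Subtype.ext (LinearEquiv.ext fun v => Subtype.ext ?_)
        rw [hresE_coe]
        rfl,
      map_mul' := by
        intro σ τ
        funext l
        refine Subtype.ext (LinearEquiv.ext fun v => Subtype.ext ?_)
        have h1 : ((resE (σ * τ) l v : ↥(Vl l.1)) : V.carrier) =
            (σ : V.carrier ≃ₗ[R] V.carrier) ((τ : V.carrier ≃ₗ[R] V.carrier) v) :=
          hresE_coe (σ * τ) l v
        have h2 : ((resE σ l (resE τ l v) : ↥(Vl l.1)) : V.carrier) =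
            (σ : V.carrier ≃ₗ[R] V.carrier) ((τ : V.carrier ≃ₗ[R] V.carrier) v) := by
          rw [hresE_coe σ l (resE τ l v), hresE_coe τ l v]
        exact h1.trans h2.symm }
  have hΦapp : ∀ (σ : V.orthGroup) (l : {l : Λ // Vl l ≠ ⊥}),
      ((Φ σ l : (V.restrictSub (Vl l.1)).orthGroup) :
        ↥(Vl l.1) ≃ₗ[R] ↥(Vl l.1)) = resE σ l := fun σ l => rfl
  -- membership facts for base elements
  have hmemVl : ∀ (l : Λ) (x : V.carrier), x ∈ typeSet l → x ∈ Vl l := by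
    intro l x h
    rw [hspanT l]
    exact Submodule.subset_span h
  have hBmem : ∀ b ∈ V.base, ∃ l : Λ, b ∈ typeSet l := by
    intro b hb
    obtain ⟨l, hiso⟩ := hcompt (V.comp b) ⟨b, hb, rfl⟩
    exact ⟨l, hb, hiso⟩
  have hVlnebot : ∀ (l : Λ) (b : V.carrier), b ∈ typeSet l → Vl l ≠ ⊥ := by
    intro l b hbT
    rw [Submodule.ne_bot_iff]
    exact ⟨b, hmemVl l b hbT, hBase.base_ne_zero hbT.1⟩
  have hpick : ∀ b : ↥V.base, ∃ l : {l : Λ // Vl l ≠ ⊥}, (b : V.carrier) ∈ typeSet l.1 := by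
    intro b
    obtain ⟨l, hT⟩ := hBmem b b.2
    exact ⟨⟨l, hVlnebot l b hT⟩, hT⟩
  choose tf htf using hpick
  have htfeq : ∀ (b : ↥V.base) (l : {l : Λ // Vl l ≠ ⊥}), (b : V.carrier) ∈ typeSet l.1 →
      tf b = l := fun b l h => Subtype.ext (htuniq _ _ _ (htf b) h)
  -- injectivity
  have hΦinj : Function.Injective Φ := by
    intro σ τ h
    refine Subtype.ext (LinearEquiv.toLinearMap_injective
      (LinearMap.ext_on hBase.span_eq_top fun b hb => ?_))
    obtain ⟨l, hT⟩ := hBmem b hb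
    have hl : Vl l ≠ ⊥ := hVlnebot l b hT
    have hbVl : b ∈ Vl l := hmemVl l b hT
    have h2 : ((Φ σ ⟨l, hl⟩ : (V.restrictSub (Vl l)).orthGroup) :
          ↥(Vl l) ≃ₗ[R] ↥(Vl l)) ⟨b, hbVl⟩ =
        ((Φ τ ⟨l, hl⟩ : (V.restrictSub (Vl l)).orthGroup) :
          ↥(Vl l) ≃ₗ[R] ↥(Vl l)) ⟨b, hbVl⟩ := by rw [h]
    have h3 := congrArg (Subtype.val : ↥(Vl l) → V.carrier) h2
    have e1 := hresE_coe σ ⟨l, hl⟩ ⟨b, hbVl⟩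
    have e2 := hresE_coe τ ⟨l, hl⟩ ⟨b, hbVl⟩
    exact e1.symm.trans (h3.trans e2)
  -- grouped pieces of a coordinate vector
  let xF : (↥V.base →₀ R) → {l : Λ // Vl l ≠ ⊥} → V.carrier := fun c l =>
    ∑ b ∈ c.support.filter (fun b => tf b = l), c b • (b : V.carrier)
  have hxF_mem : ∀ c l, xF c l ∈ Vl l.1 := by
    intro c l
    refine Submodule.sum_mem _ fun b hb => Submodule.smul_mem _ _ (hmemVl _ _ ?_)
    have hbl : tf b = l := (Finset.mem_filter.mp hb).2
    rw [← hbl]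
    exact htf b
  have hxF_zero : ∀ (c : ↥V.base →₀ R) (l), l ∉ c.support.image tf → xF c l = 0 := by
    intro c l hl
    show (∑ b ∈ c.support.filter (fun b => tf b = l), c b • (b : V.carrier)) = 0
    rw [Finset.filter_eq_empty_iff.mpr (fun {b} hb hbl => hl (Finset.mem_image.mpr ⟨b, hb, hbl⟩)),
      Finset.sum_empty]
  have hdecomp : ∀ (c : ↥V.base →₀ R) (s : Finset {l : Λ // Vl l ≠ ⊥}),
      c.support.image tf ⊆ s →
      (c.sum fun b r => r • (b : V.carrier)) = ∑ l ∈ s, xF c l := by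
    intro c s hs
    have h1 : ∑ l ∈ s, xF c l = ∑ l ∈ c.support.image tf, xF c l :=
      (Finset.sum_subset hs fun l _ hl => hxF_zero c l hl).symm
    have h2 : ∑ l ∈ c.support.image tf, xF c l = ∑ b ∈ c.support, c b • (b : V.carrier) :=
      Finset.sum_fiberwise_of_maps_to (fun b hb => Finset.mem_image_of_mem tf hb) _
    exact (h1.trans h2).symm
  -- q is additive across distinct isotypical pieces
  have hqsum : ∀ (s : Finset {l : Λ // Vl l ≠ ⊥}) (xf : {l : Λ // Vl l ≠ ⊥} → V.carrier),
      (∀ l ∈ s, xf l ∈ Vl l.1) → V.q (∑ l ∈ s, xf l) = ∑ l ∈ s, V.q (xf l) := by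
    intro s
    induction s using Finset.induction_on with
    | empty => intro xf _; simpa using q0
    | @insert a s ha ih =>
      intro xf hmem
      rw [Finset.sum_insert ha, Finset.sum_insert ha]
      have hy : (∑ l ∈ s, xf l) ∈ Submodule.span R {x | ∃ m ∈ s, x ∈ typeSet m.1} :=
        Submodule.sum_mem _ fun m hms => Submodule.span_mono
          (show typeSet m.1 ⊆ {x | ∃ m ∈ s, x ∈ typeSet m.1} from fun x hx => ⟨m, hms, hx⟩)
          ((hspanT m.1) ▸ hmem m (Finset.mem_insert_of_mem hms))
      have hcr : ∀ e ∈ typeSet a.1, ∀ f ∈ {x | ∃ m ∈ s, x ∈ typeSet m.1}, ∀ a' c' : R,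
          V.q (a' • e + c' • f) = V.q (a' • e) + V.q (c' • f) := by
        rintro e he f ⟨m, hms, hf⟩ a' c'
        exact hcrossq (fun hv => ha (by rw [show a = m from Subtype.ext hv]; exact hms))
          e he f hf a' c'
      have hQ := QMod.qlin_span hG hcr (xf a)
        ((hspanT a.1) ▸ hmem a (Finset.mem_insert_self a s)) (∑ l ∈ s, xf l) hy
      rw [hQ, ih xf (fun l hl => hmem l (Finset.mem_insert_of_mem hl))]
  -- the builder of an isometry from a family
  let bld : (∀ l : {l : Λ // Vl l ≠ ⊥}, ((V.restrictSub (Vl l.1)).orthGroup : Type u)) →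
      (V.carrier →ₗ[R] V.carrier) := fun τf =>
    (Finsupp.linearCombination R (fun b : ↥V.base =>
      ((((τf (tf b) : (V.restrictSub (Vl (tf b).1)).orthGroup) :
          ↥(Vl (tf b).1) ≃ₗ[R] ↥(Vl (tf b).1))
        ⟨(b : V.carrier), hmemVl _ _ (htf b)⟩ : ↥(Vl (tf b).1)) : V.carrier))).comp
      hBase.equiv.symm.toLinearMap
  have hbld_base : ∀ (τf) (b : V.carrier) (hb : b ∈ V.base), bld τf b =
      ((((τf (tf ⟨b, hb⟩) : (V.restrictSub (Vl (tf ⟨b, hb⟩).1)).orthGroup) :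
          ↥(Vl (tf ⟨b, hb⟩).1) ≃ₗ[R] ↥(Vl (tf ⟨b, hb⟩).1))
        ⟨b, hmemVl _ _ (htf ⟨b, hb⟩)⟩ : ↥(Vl (tf ⟨b, hb⟩).1)) : V.carrier) := by
    intro τf b hb
    show Finsupp.linearCombination R _ (hBase.equiv.symm b) = _
    rw [hBase.coords_base hb, Finsupp.linearCombination_single, one_smul]
  have hbld_on : ∀ (τf) (l : {l : Λ // Vl l ≠ ⊥}) (x : V.carrier) (hx : x ∈ Vl l.1),
      bld τf x = ((((τf l : (V.restrictSub (Vl l.1)).orthGroup) :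
          ↥(Vl l.1) ≃ₗ[R] ↥(Vl l.1)) ⟨x, hx⟩ : ↥(Vl l.1)) : V.carrier) := by
    intro τf l x hx
    suffices h : ∀ x' (hx' : x' ∈ Submodule.span R (typeSet l.1)),
        bld τf x' = ((((τf l : (V.restrictSub (Vl l.1)).orthGroup) :
          ↥(Vl l.1) ≃ₗ[R] ↥(Vl l.1)) ⟨x', (hspanT l.1).ge hx'⟩ : ↥(Vl l.1)) : V.carrier) by
      exact h x ((hspanT l.1).le hx)
    intro x' hx'
    induction hx' using Submodule.span_induction with
    | mem b hbT =>
      have hbB : b ∈ V.base := hbT.1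
      rw [hbld_base τf b hbB]
      have htfb : tf ⟨b, hbB⟩ = l := htfeq _ l hbT
      subst htfb
      rfl
    | zero =>
      rw [map_zero]
      have hz : (⟨(0 : V.carrier), (hspanT l.1).ge (Submodule.zero_mem _)⟩ : ↥(Vl l.1)) = 0 :=
        rfl
      rw [hz, map_zero]
      rfl
    | add x y hx1 hy1 ihx ihy =>
      rw [map_add, ihx, ihy]
      have hxy : (⟨x + y, (hspanT l.1).ge (Submodule.add_mem _ hx1 hy1)⟩ : ↥(Vl l.1)) =
          ⟨x, (hspanT l.1).ge hx1⟩ + ⟨y, (hspanT l.1).ge hy1⟩ := rfl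
      rw [hxy, map_add]
      rfl
    | smul a x hx1 ihx =>
      rw [map_smul, ihx]
      have hax : (⟨a • x, (hspanT l.1).ge (Submodule.smul_mem _ a hx1)⟩ : ↥(Vl l.1)) =
          a • ⟨x, (hspanT l.1).ge hx1⟩ := rfl
      rw [hax, map_smul]
      rfl
  -- composing builders of inverse families
  have hbldcomp : ∀ τ1 τ2 : (∀ l : {l : Λ // Vl l ≠ ⊥}, ((V.restrictSub (Vl l.1)).orthGroup : Type u)),
      (∀ l, τ2 l = (τ1 l)⁻¹) → (bld τ2).comp (bld τ1) = LinearMap.id := by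
    intro τ1 τ2 h12
    apply LinearMap.ext_on hBase.span_eq_top
    intro b hb
    show bld τ2 (bld τ1 b) = b
    rw [hbld_base τ1 b hb]
    set l := tf ⟨b, hb⟩ with hldef
    set v : ↥(Vl l.1) := ⟨b, hmemVl _ _ (htf ⟨b, hb⟩)⟩ with hvdef
    set w : ↥(Vl l.1) := ((τ1 l : (V.restrictSub (Vl l.1)).orthGroup) :
      ↥(Vl l.1) ≃ₗ[R] ↥(Vl l.1)) v with hwdef
    rw [hbld_on τ2 l (w : V.carrier) w.2, h12 l]
    show ((((τ1 l : (V.restrictSub (Vl l.1)).orthGroup) :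
      ↥(Vl l.1) ≃ₗ[R] ↥(Vl l.1)).symm w : ↥(Vl l.1)) : V.carrier) = b
    rw [hwdef, LinearEquiv.symm_apply_apply]
  -- surjectivity
  have hΦsurj : Function.Surjective Φ := by
    intro τf
    have h1 : (bld (fun l => (τf l)⁻¹)).comp (bld τf) = LinearMap.id := by
      exact hbldcomp τf (fun l => (τf l)⁻¹) (fun l => rfl)
    have h2 : (bld τf).comp (bld (fun l => (τf l)⁻¹)) = LinearMap.id := by
      exact hbldcomp (fun l => (τf l)⁻¹) τf (fun l => (inv_inv _).symm)
    set σe : V.carrier ≃ₗ[R] V.carrier :=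
      LinearEquiv.ofLinear (bld τf) (bld (fun l => (τf l)⁻¹)) h2 h1 with hσedef
    have hσeapp : ∀ x, σe x = bld τf x := fun _ => rfl
    have hσq : ∀ x, V.q (σe x) = V.q x := by
      intro x
      obtain ⟨c, hc, -⟩ := hBase x
      set s := c.support.image tf with hsdef
      have hx : x = ∑ l ∈ s, xF c l := by
        rw [hc]
        exact hdecomp c s (Finset.Subset.refl _)
      have hF : σe x = ∑ l ∈ s, ((((τf l : (V.restrictSub (Vl l.1)).orthGroup) :
          ↥(Vl l.1) ≃ₗ[R] ↥(Vl l.1)) ⟨xF c l, hxF_mem c l⟩ : ↥(Vl l.1)) : V.carrier) := by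
        rw [hσeapp, hx, map_sum]
        exact Finset.sum_congr rfl fun l _ => hbld_on τf l (xF c l) (hxF_mem c l)
      calc V.q (σe x)
          = ∑ l ∈ s, V.q ((((τf l : (V.restrictSub (Vl l.1)).orthGroup) :
              ↥(Vl l.1) ≃ₗ[R] ↥(Vl l.1)) ⟨xF c l, hxF_mem c l⟩ : ↥(Vl l.1)) : V.carrier) := by
            rw [hF, hqsum s _ (fun l _ => Submodule.coe_mem _)]
        _ = ∑ l ∈ s, V.q (xF c l) :=
            Finset.sum_congr rfl fun l _ => (τf l).2 ⟨xF c l, hxF_mem c l⟩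
        _ = V.q x := by rw [← hqsum s _ (fun l _ => hxF_mem c l), ← hx]
    refine ⟨⟨σe, hσq⟩, ?_⟩
    funext l
    refine Subtype.ext (LinearEquiv.ext fun v => Subtype.ext ?_)
    have hcoe := hresE_coe ⟨σe, hσq⟩ l v
    rw [hΦapp, hcoe]
    show σe (v : V.carrier) = _
    rw [hσeapp, hbld_on τf l (v : V.carrier) v.2]
  exact ⟨MulEquiv.ofBijective Φ ⟨hΦinj, hΦsurj⟩, fun σ l x hx => hresE_coe σ l ⟨x, hx⟩⟩

end QModMain

namespace BMod
variable {R : Type u} [CommSemiring R] {M N P : BMod R}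

lemma Isom.symm (h : M.Isom N) : N.Isom M := by
  obtain ⟨e, he⟩ := h
  refine ⟨e.symm, fun x y => ?_⟩
  have := he (e.symm x) (e.symm y)
  rw [e.apply_symm_apply, e.apply_symm_apply] at this
  exact this.symm

lemma Isom.trans (h1 : M.Isom N) (h2 : N.Isom P) : M.Isom P := by
  obtain ⟨e1, he1⟩ := h1
  obtain ⟨e2, he2⟩ := h2
  exact ⟨e1.trans e2, fun x y => (he2 _ _).trans (he1 x y)⟩

lemma edge_symm (hG : M.Good) {x y : M.carrier} (h : M.edge x y) : M.edge y x := by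
  obtain ⟨hx, hy, hne, hb⟩ := h
  refine ⟨hy, hx, hne.symm, fun h0 => hb ?_⟩
  rw [hG.1 x y, h0]

lemma b_zero_left (hG : M.Good) (y : M.carrier) : M.b 0 y = 0 := by
  have := hG.2.2.1 0 0 y
  rwa [zero_smul, zero_mul] at this

lemma b_zero_right (hG : M.Good) (x : M.carrier) : M.b x 0 = 0 := by
  rw [hG.1, b_zero_left hG]

lemma b_add_right (hG : M.Good) (x y z : M.carrier) :
    M.b x (y + z) = M.b x y + M.b x z := by
  rw [hG.1, hG.2.1, hG.1 y x, hG.1 z x]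

lemma b_smul_right (hG : M.Good) (a : R) (x y : M.carrier) :
    M.b x (a • y) = a * M.b x y := by
  rw [hG.1, hG.2.2.1, hG.1 y x]

lemma b_sum_left (hG : M.Good) {ι : Type*} (s : Finset ι) (x : ι → M.carrier)
    (y : M.carrier) : M.b (∑ i ∈ s, x i) y = ∑ i ∈ s, M.b (x i) y := by
  classical
  induction s using Finset.induction_on with
  | empty => simpa using b_zero_left hG y
  | @insert a s ha ih => rw [Finset.sum_insert ha, Finset.sum_insert ha, hG.2.1, ih]

lemma b_sum_right (hG : M.Good) {ι : Type*} (s : Finset ι) (x : M.carrier)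
    (y : ι → M.carrier) : M.b x (∑ i ∈ s, y i) = ∑ i ∈ s, M.b x (y i) := by
  rw [hG.1, b_sum_left hG]
  exact Finset.sum_congr rfl fun i _ => hG.1 _ _

lemma blin_span (hG : M.Good) {P Q : Set M.carrier}
    (h : ∀ e ∈ P, ∀ f ∈ Q, M.b e f = 0) :
    ∀ x ∈ Submodule.span R P, ∀ y ∈ Submodule.span R Q, M.b x y = 0 := by
  have hR : ∀ x : M.carrier, (∀ f ∈ Q, M.b x f = 0) →
      ∀ y ∈ Submodule.span R Q, M.b x y = 0 := by
    intro x hx0 y hy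
    induction hy using Submodule.span_induction with
    | mem f hf => exact hx0 f hf
    | zero => exact b_zero_right hG x
    | add y z _ _ ihy ihz => rw [b_add_right hG, ihy, ihz, add_zero]
    | smul a y _ ihy => rw [b_smul_right hG, ihy, mul_zero]
  intro x hx y hy
  induction hx using Submodule.span_induction with
  | mem e he => exact hR e (fun f hf => h e he f hf) y hy
  | zero => exact b_zero_left hG y
  | add x z _ _ ihx ihz => rw [hG.2.1, ihx, ihz, add_zero]
  | smul a x _ ihx => rw [hG.2.2.1, ihx, mul_zero]

lemma isom_restrict_of_map {V : BMod R} (τ : V.carrier ≃ₗ[R] V.carrier)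
    (hτ : ∀ x y, V.b (τ x) (τ y) = V.b x y) {C C' : Set V.carrier}
    (h : Submodule.map τ.toLinearMap (Submodule.span R C) = Submodule.span R C') :
    (V.restrict C).Isom (V.restrict C') := by
  refine ⟨(τ.submoduleMap (Submodule.span R C)).trans (LinearEquiv.ofEq _ _ h), fun x y => ?_⟩
  exact hτ _ _

end BMod

section BModMain
variable {R : Type u} [CommSemiring R]

set_option maxHeartbeats 2000000 in
theorem bmod_key (V : BMod R) (hG : V.Good)
    (Λ : Type u) (rep : Λ → BMod R)
    (hrepG : ∀ l, (rep l).Good ∧ (rep l).Indecomp)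
    (hrepinj : ∀ l m, (rep l).Isom (rep m) → l = m)
    (hcompt : ∀ C ∈ V.comps, ∃ l, (V.restrict C).Isom (rep l))
    (Vl : Λ → Submodule R V.carrier)
    (hVl : ∀ l, Vl l =
      Submodule.span R (⋃₀ {C | C ∈ V.comps ∧ (V.restrict C).Isom (rep l)})) :
    (∀ σ : V.carrier ≃ₗ[R] V.carrier, (∀ x y, V.b (σ x) (σ y) = V.b x y) →
      ∀ l, Submodule.map σ.toLinearMap (Vl l) = Vl l) ∧
    ∃ φ : V.orthGroup ≃*
        ((l : {l : Λ // Vl l ≠ ⊥}) → (V.restrictSub (Vl l.1)).orthGroup),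
      ∀ (σ : V.orthGroup) (l : {l : Λ // Vl l ≠ ⊥}) (x : V.carrier) (hx : x ∈ Vl l.1),
        (((φ σ l :
            (V.restrictSub (Vl l.1)).carrier ≃ₗ[R] (V.restrictSub (Vl l.1)).carrier)
              ⟨x, hx⟩ : V.carrier) =
          (σ : V.carrier ≃ₗ[R] V.carrier) x) := by
  classical
  rcases subsingleton_or_nontrivial V.carrier with hss | hnt
  · have hsubm : ∀ p q : Submodule R V.carrier, p = q := by
      intro p q; ext x; rw [Subsingleton.elim x 0]; simp
    haveI : Subsingleton (V.carrier ≃ₗ[R] V.carrier) :=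
      ⟨fun f g => LinearEquiv.ext fun x => Subsingleton.elim _ _⟩
    haveI hLempty : IsEmpty {l : Λ // Vl l ≠ ⊥} := ⟨fun l => l.2 (hsubm _ _)⟩
    refine ⟨fun σ _ l => hsubm _ _, ?_⟩
    exact ⟨MulEquiv.mk (equivOfSubsingletonOfSubsingleton (fun _ => 1) (fun _ => 1))
      (fun _ _ => Subsingleton.elim _ _), fun σ l _ _ => Subsingleton.elim _ _⟩
  haveI : Nontrivial R := by
    rcases subsingleton_or_nontrivial R with h | h
    · exact absurd (Module.subsingleton R V.carrier) (not_subsingleton_iff_nontrivial.mpr hnt)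
    · exact h
  have hBase : IsBaseSet R V.base := hG.2.2.2.1
  have hUB := hG.2.2.2.2
  have hbsym : ∀ x y : V.carrier, V.b x y = V.b y x := hG.1
  have hedgesym : ∀ a b : V.carrier, V.edge a b → V.edge b a :=
    fun a b h => BMod.edge_symm hG h
  have hmemself : ∀ x ∈ V.base, x ∈ V.comp x := fun x hx => mem_compSet_self hx
  have hcompeq : ∀ x y : V.carrier, y ∈ V.comp x → V.comp y = V.comp x :=
    fun x y h => compSet_eq_of_mem hedgesym h
  set typeSet : Λ → Set V.carrier :=
    fun l => {x | x ∈ V.base ∧ (V.restrict (V.comp x)).Isom (rep l)} with htypeSet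
  have hspanT : ∀ l, Vl l = Submodule.span R (typeSet l) := by
    intro l
    rw [hVl l]
    apply le_antisymm
    · refine Submodule.span_le.2 ?_
      rintro x ⟨C, ⟨⟨z, hz, rfl⟩, hiso⟩, hxC⟩
      refine Submodule.subset_span ⟨hxC.1, ?_⟩
      rw [hcompeq z x hxC]
      exact hiso
    · refine Submodule.span_mono ?_
      rintro x ⟨hxB, hiso⟩
      exact ⟨V.comp x, ⟨⟨x, hxB, rfl⟩, hiso⟩, hmemself x hxB⟩
  have htuniq : ∀ x : V.carrier, ∀ l m : Λ, x ∈ typeSet l → x ∈ typeSet m → l = m :=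
    fun x l m h1 h2 => hrepinj l m (BMod.Isom.trans (BMod.Isom.symm h1.2) h2.2)
  have hcross : ∀ {l m : Λ}, l ≠ m → ∀ e ∈ typeSet l, ∀ f ∈ typeSet m,
      ¬ V.edge e f ∧ e ≠ f := by
    intro l m hne e he f hf
    have hef : e ≠ f := fun h => hne (htuniq e l m he (h ▸ hf))
    refine ⟨fun hedge => ?_, hef⟩
    have hfc : f ∈ V.comp e := ⟨hedge.2.1, Or.inr (Relation.TransGen.single hedge)⟩
    have hiso' : (V.restrict (V.comp f)).Isom (rep l) := by
      rw [hcompeq e f hfc]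
      exact he.2
    exact hne (htuniq f l m ⟨hedge.2.1, hiso'⟩ hf)
  have hcrossb : ∀ {l m : Λ}, l ≠ m → ∀ e ∈ typeSet l, ∀ f ∈ typeSet m,
      V.b e f = 0 := by
    intro l m hne e he f hf
    obtain ⟨hnedge, hef⟩ := hcross hne e he f hf
    by_contra hb0
    exact hnedge ⟨he.1, hf.1, hef, hb0⟩
  have hcross0 : ∀ {l m : Λ}, l ≠ m → ∀ x ∈ Vl l, ∀ y ∈ Vl m, V.b x y = 0 := by
    intro l m hne x hx y hy
    rw [hspanT l] at hx
    rw [hspanT m] at hy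
    exact BMod.blin_span hG (fun e he f hf => hcrossb hne e he f hf) x hx y hy
  have hiso_symm : ∀ (τ : V.carrier ≃ₗ[R] V.carrier),
      (∀ x y, V.b (τ x) (τ y) = V.b x y) →
      ∀ x y, V.b (τ.symm x) (τ.symm y) = V.b x y := by
    intro τ hτ x y
    have := hτ (τ.symm x) (τ.symm y)
    rw [τ.apply_symm_apply, τ.apply_symm_apply] at this
    exact this.symm
  have hedgemap : ∀ (τ : V.carrier ≃ₗ[R] V.carrier) (_ : ∀ x y, V.b (τ x) (τ y) = V.b x y),
      ∀ b b' : V.carrier, V.edge b b' →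
      ∀ (u u' : Rˣ) (w w' : V.carrier), w ∈ V.base → w' ∈ V.base →
      τ b = (u : R) • w → τ b' = (u' : R) • w' → V.edge w w' := by
    intro τ hτ b b' hedge u u' w w' hwB hw'B hbw hb'w'
    have hne : w ≠ w' := by
      rintro rfl
      have hsm : b' = ((u' : R) * ((u⁻¹ : Rˣ) : R)) • b := by
        apply τ.injective
        rw [map_smul, hbw, hb'w', smul_smul, mul_assoc, Units.inv_mul, mul_one]
      exact hedge.2.2.1 (hBase.eq_of_smul hedge.1 hedge.2.1 hsm).symm
    refine ⟨hwB, hw'B, hne, fun h0 => hedge.2.2.2 ?_⟩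
    have h1 : V.b b b' = (u : R) * ((u' : R) * V.b w w') := by
      rw [← hτ b b', hbw, hb'w']
      calc V.b ((u : R) • w) ((u' : R) • w') = (u : R) * V.b w ((u' : R) • w') :=
            hG.2.2.1 _ _ _
        _ = (u : R) * ((u' : R) * V.b w w') := by rw [BMod.b_smul_right hG]
    rw [h1, h0, mul_zero, mul_zero]
  have htrans : ∀ (τ : V.carrier ≃ₗ[R] V.carrier)
      (_ : ∀ x y, V.b (τ x) (τ y) = V.b x y),
      ∀ b ∈ V.base, ∀ (u : Rˣ), ∀ w ∈ V.base, τ b = (u : R) • w →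
      ∀ y ∈ V.comp b, ∃ (u' : Rˣ) (w' : V.carrier), w' ∈ V.comp w ∧ τ y = (u' : R) • w' := by
    intro τ hτ b hb u w hwB hbw y hy
    obtain ⟨hyB, hcase⟩ := hy
    rcases hcase with rfl | hchain
    · exact ⟨u, w, hmemself w hwB, hbw⟩
    · have key : ∀ z : V.carrier, Relation.TransGen V.edge b z →
          ∃ (u' : Rˣ) (w' : V.carrier), w' ∈ V.base ∧
            (w = w' ∨ Relation.TransGen V.edge w w') ∧ τ z = (u' : R) • w' := by
        intro z hchain
        induction hchain with
        | single h =>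
          obtain ⟨u₂, w₂, hw₂B, hτz⟩ := hUB _ (hBase.image τ) _ ⟨_, h.2.1, rfl⟩
          have he2 : V.edge w w₂ := hedgemap τ hτ _ _ h u u₂ w w₂ hwB hw₂B hbw hτz
          exact ⟨u₂, w₂, hw₂B, Or.inr (Relation.TransGen.single he2), hτz⟩
        | @tail y₁ y₂ hby hstep ih =>
          obtain ⟨u₂, w₂, hw₂B, hch, hτy₁⟩ := ih
          obtain ⟨u₃, w₃, hw₃B, hτy₂⟩ := hUB _ (hBase.image τ) _ ⟨_, hstep.2.1, rfl⟩
          have he23 : V.edge w₂ w₃ :=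
            hedgemap τ hτ _ _ hstep u₂ u₃ w₂ w₃ hw₂B hw₃B hτy₁ hτy₂
          refine ⟨u₃, w₃, hw₃B, ?_, hτy₂⟩
          rcases hch with rfl | hch
          · exact Or.inr (Relation.TransGen.single he23)
          · exact Or.inr (hch.tail he23)
      obtain ⟨u', w', hw'B, hch, hτy⟩ := key y hchain
      exact ⟨u', w', ⟨hw'B, hch⟩, hτy⟩
  have hmapcomp : ∀ (τ : V.carrier ≃ₗ[R] V.carrier)
      (_ : ∀ x y, V.b (τ x) (τ y) = V.b x y),
      ∀ e ∈ V.base, ∀ (u : Rˣ), ∀ w ∈ V.base, τ e = (u : R) • w →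
      Submodule.map τ.toLinearMap (Submodule.span R (V.comp e)) =
        Submodule.span R (V.comp w) := by
    intro τ hτ e heB u w hwB hew
    apply le_antisymm
    · rw [Submodule.map_span]
      refine Submodule.span_le.2 ?_
      rintro _ ⟨y, hy, rfl⟩
      obtain ⟨u', w', hw', hτy⟩ := htrans τ hτ e heB u w hwB hew y hy
      show τ y ∈ Submodule.span R (V.comp w)
      rw [hτy]
      exact Submodule.smul_mem _ _ (Submodule.subset_span hw')
    · refine Submodule.span_le.2 ?_
      intro y hy
      have hwe : τ.symm w = ((u⁻¹ : Rˣ) : R) • e := by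
        apply τ.injective
        rw [τ.apply_symm_apply, map_smul, hew, smul_smul, Units.inv_mul, one_smul]
      obtain ⟨u', w', hw', hτy⟩ :=
        htrans τ.symm (hiso_symm τ hτ) w hwB u⁻¹ e heB hwe y hy
      show y ∈ Submodule.map τ.toLinearMap (Submodule.span R (V.comp e))
      refine Submodule.mem_map.mpr ⟨τ.symm y, ?_, τ.apply_symm_apply y⟩
      rw [hτy]
      exact Submodule.smul_mem _ _ (Submodule.subset_span hw')
  have hsub : ∀ (τ : V.carrier ≃ₗ[R] V.carrier)
      (_ : ∀ x y, V.b (τ x) (τ y) = V.b x y),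
      ∀ l, Submodule.map τ.toLinearMap (Vl l) ≤ Vl l := by
    intro τ hτ l
    rw [hspanT l, Submodule.map_span]
    refine Submodule.span_le.2 ?_
    rintro _ ⟨e, ⟨heB, hiso⟩, rfl⟩
    obtain ⟨u, w, hwB, hew⟩ := hUB _ (hBase.image τ) _ ⟨e, heB, rfl⟩
    have hmapc := hmapcomp τ hτ e heB u w hwB hew
    have hisoCC : (V.restrict (V.comp e)).Isom (V.restrict (V.comp w)) :=
      BMod.isom_restrict_of_map τ hτ hmapc
    have hwT : w ∈ typeSet l := ⟨hwB, BMod.Isom.trans (BMod.Isom.symm hisoCC) hiso⟩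
    show τ e ∈ Submodule.span R (typeSet l)
    rw [hew]
    exact Submodule.smul_mem _ _ (Submodule.subset_span hwT)
  have hA : ∀ σ : V.carrier ≃ₗ[R] V.carrier, (∀ x y, V.b (σ x) (σ y) = V.b x y) →
      ∀ l, Submodule.map σ.toLinearMap (Vl l) = Vl l := by
    intro σ hσ l
    refine le_antisymm (hsub σ hσ l) fun x hx => ?_
    have h1 : σ.symm x ∈ Vl l :=
      hsub σ.symm (hiso_symm σ hσ) l (Submodule.mem_map.mpr ⟨x, hx, rfl⟩)
    exact Submodule.mem_map.mpr ⟨σ.symm x, h1, σ.apply_symm_apply x⟩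
  refine ⟨hA, ?_⟩
  -- Part B
  have hmemiff : ∀ σ : V.orthGroup, ∀ x y,
      V.b ((σ : V.carrier ≃ₗ[R] V.carrier) x) ((σ : V.carrier ≃ₗ[R] V.carrier) y) = V.b x y :=
    fun σ => σ.2
  let resE : V.orthGroup → ∀ l : {l : Λ // Vl l ≠ ⊥}, ↥(Vl l.1) ≃ₗ[R] ↥(Vl l.1) :=
    fun σ l => ((σ : V.carrier ≃ₗ[R] V.carrier).submoduleMap (Vl l.1)).trans
      (LinearEquiv.ofEq _ _ (hA _ (hmemiff σ) l.1))
  have hresE_coe : ∀ (σ : V.orthGroup) (l : {l : Λ // Vl l ≠ ⊥}) (v : ↥(Vl l.1)),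
      ((resE σ l v : ↥(Vl l.1)) : V.carrier) = (σ : V.carrier ≃ₗ[R] V.carrier) v :=
    fun σ l v => rfl
  have hresE_mem : ∀ (σ : V.orthGroup) (l : {l : Λ // Vl l ≠ ⊥}),
      resE σ l ∈ (V.restrictSub (Vl l.1)).orthGroup := by
    intro σ l
    have : ∀ v w : ↥(Vl l.1),
        V.b ((resE σ l v : ↥(Vl l.1)) : V.carrier) ((resE σ l w : ↥(Vl l.1)) : V.carrier) =
          V.b (v : V.carrier) (w : V.carrier) := by
      intro v w
      rw [hresE_coe, hresE_coe]
      exact hmemiff σ v w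
    exact this
  let Φ : V.orthGroup →*
      ((l : {l : Λ // Vl l ≠ ⊥}) → (V.restrictSub (Vl l.1)).orthGroup) :=
    { toFun := fun σ l => ⟨resE σ l, hresE_mem σ l⟩,
      map_one' := by
        funext l
        refine Subtype.ext (LinearEquiv.ext fun v => Subtype.ext ?_)
        rw [hresE_coe]
        rfl,
      map_mul' := by
        intro σ τ
        funext l
        refine Subtype.ext (LinearEquiv.ext fun v => Subtype.ext ?_)
        have h1 : ((resE (σ * τ) l v : ↥(Vl l.1)) : V.carrier) =
            (σ : V.carrier ≃ₗ[R] V.carrier) ((τ : V.carrier ≃ₗ[R] V.carrier) v) :=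
          hresE_coe (σ * τ) l v
        have h2 : ((resE σ l (resE τ l v) : ↥(Vl l.1)) : V.carrier) =
            (σ : V.carrier ≃ₗ[R] V.carrier) ((τ : V.carrier ≃ₗ[R] V.carrier) v) := by
          rw [hresE_coe σ l (resE τ l v), hresE_coe τ l v]
        exact h1.trans h2.symm }
  have hΦapp : ∀ (σ : V.orthGroup) (l : {l : Λ // Vl l ≠ ⊥}),
      ((Φ σ l : (V.restrictSub (Vl l.1)).orthGroup) :
        ↥(Vl l.1) ≃ₗ[R] ↥(Vl l.1)) = resE σ l := fun σ l => rfl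
  have hmemVl : ∀ (l : Λ) (x : V.carrier), x ∈ typeSet l → x ∈ Vl l := by
    intro l x h
    rw [hspanT l]
    exact Submodule.subset_span h
  have hBmem : ∀ b ∈ V.base, ∃ l : Λ, b ∈ typeSet l := by
    intro b hb
    obtain ⟨l, hiso⟩ := hcompt (V.comp b) ⟨b, hb, rfl⟩
    exact ⟨l, hb, hiso⟩
  have hVlnebot : ∀ (l : Λ) (b : V.carrier), b ∈ typeSet l → Vl l ≠ ⊥ := by
    intro l b hbT
    rw [Submodule.ne_bot_iff]
    exact ⟨b, hmemVl l b hbT, hBase.base_ne_zero hbT.1⟩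
  have hpick : ∀ b : ↥V.base, ∃ l : {l : Λ // Vl l ≠ ⊥}, (b : V.carrier) ∈ typeSet l.1 := by
    intro b
    obtain ⟨l, hT⟩ := hBmem b b.2
    exact ⟨⟨l, hVlnebot l b hT⟩, hT⟩
  choose tf htf using hpick
  have htfeq : ∀ (b : ↥V.base) (l : {l : Λ // Vl l ≠ ⊥}), (b : V.carrier) ∈ typeSet l.1 →
      tf b = l := fun b l h => Subtype.ext (htuniq _ _ _ (htf b) h)
  have hΦinj : Function.Injective Φ := by
    intro σ τ h
    refine Subtype.ext (LinearEquiv.toLinearMap_injective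
      (LinearMap.ext_on hBase.span_eq_top fun b hb => ?_))
    obtain ⟨l, hT⟩ := hBmem b hb
    have hl : Vl l ≠ ⊥ := hVlnebot l b hT
    have hbVl : b ∈ Vl l := hmemVl l b hT
    have h2 : ((Φ σ ⟨l, hl⟩ : (V.restrictSub (Vl l)).orthGroup) :
          ↥(Vl l) ≃ₗ[R] ↥(Vl l)) ⟨b, hbVl⟩ =
        ((Φ τ ⟨l, hl⟩ : (V.restrictSub (Vl l)).orthGroup) :
          ↥(Vl l) ≃ₗ[R] ↥(Vl l)) ⟨b, hbVl⟩ := by rw [h]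
    have h3 := congrArg (Subtype.val : ↥(Vl l) → V.carrier) h2
    have e1 := hresE_coe σ ⟨l, hl⟩ ⟨b, hbVl⟩
    have e2 := hresE_coe τ ⟨l, hl⟩ ⟨b, hbVl⟩
    exact e1.symm.trans (h3.trans e2)
  let xF : (↥V.base →₀ R) → {l : Λ // Vl l ≠ ⊥} → V.carrier := fun c l =>
    ∑ b ∈ c.support.filter (fun b => tf b = l), c b • (b : V.carrier)
  have hxF_mem : ∀ c l, xF c l ∈ Vl l.1 := by
    intro c l
    refine Submodule.sum_mem _ fun b hb => Submodule.smul_mem _ _ (hmemVl _ _ ?_)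
    have hbl : tf b = l := (Finset.mem_filter.mp hb).2
    rw [← hbl]
    exact htf b
  have hxF_zero : ∀ (c : ↥V.base →₀ R) (l), l ∉ c.support.image tf → xF c l = 0 := by
    intro c l hl
    show (∑ b ∈ c.support.filter (fun b => tf b = l), c b • (b : V.carrier)) = 0
    rw [Finset.filter_eq_empty_iff.mpr (fun {b} hb hbl => hl (Finset.mem_image.mpr ⟨b, hb, hbl⟩)),
      Finset.sum_empty]
  have hdecomp : ∀ (c : ↥V.base →₀ R) (s : Finset {l : Λ // Vl l ≠ ⊥}),
      c.support.image tf ⊆ s →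
      (c.sum fun b r => r • (b : V.carrier)) = ∑ l ∈ s, xF c l := by
    intro c s hs
    have h1 : ∑ l ∈ s, xF c l = ∑ l ∈ c.support.image tf, xF c l :=
      (Finset.sum_subset hs fun l _ hl => hxF_zero c l hl).symm
    have h2 : ∑ l ∈ c.support.image tf, xF c l = ∑ b ∈ c.support, c b • (b : V.carrier) :=
      Finset.sum_fiberwise_of_maps_to (fun b hb => Finset.mem_image_of_mem tf hb) _
    exact (h1.trans h2).symm
  -- b is diagonal across isotypical pieces
  have hbsum : ∀ (s : Finset {l : Λ // Vl l ≠ ⊥})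
      (xf yf : {l : Λ // Vl l ≠ ⊥} → V.carrier),
      (∀ l ∈ s, xf l ∈ Vl l.1) → (∀ l ∈ s, yf l ∈ Vl l.1) →
      V.b (∑ l ∈ s, xf l) (∑ l ∈ s, yf l) = ∑ l ∈ s, V.b (xf l) (yf l) := by
    intro s xf yf hxf hyf
    rw [BMod.b_sum_left hG]
    refine Finset.sum_congr rfl fun l hl => ?_
    rw [BMod.b_sum_right hG]
    refine Finset.sum_eq_single l (fun m hm hne => ?_) (fun hls => absurd hl hls)
    exact hcross0 (fun hv => hne (Subtype.ext hv.symm)) _ (hxf l hl) _ (hyf m hm)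
  let bld : (∀ l : {l : Λ // Vl l ≠ ⊥}, ((V.restrictSub (Vl l.1)).orthGroup : Type u)) →
      (V.carrier →ₗ[R] V.carrier) := fun τf =>
    (Finsupp.linearCombination R (fun b : ↥V.base =>
      ((((τf (tf b) : (V.restrictSub (Vl (tf b).1)).orthGroup) :
          ↥(Vl (tf b).1) ≃ₗ[R] ↥(Vl (tf b).1))
        ⟨(b : V.carrier), hmemVl _ _ (htf b)⟩ : ↥(Vl (tf b).1)) : V.carrier))).comp
      hBase.equiv.symm.toLinearMap
  have hbld_base : ∀ (τf) (b : V.carrier) (hb : b ∈ V.base), bld τf b =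
      ((((τf (tf ⟨b, hb⟩) : (V.restrictSub (Vl (tf ⟨b, hb⟩).1)).orthGroup) :
          ↥(Vl (tf ⟨b, hb⟩).1) ≃ₗ[R] ↥(Vl (tf ⟨b, hb⟩).1))
        ⟨b, hmemVl _ _ (htf ⟨b, hb⟩)⟩ : ↥(Vl (tf ⟨b, hb⟩).1)) : V.carrier) := by
    intro τf b hb
    show Finsupp.linearCombination R _ (hBase.equiv.symm b) = _
    rw [hBase.coords_base hb, Finsupp.linearCombination_single, one_smul]
  have hbld_on : ∀ (τf) (l : {l : Λ // Vl l ≠ ⊥}) (x : V.carrier) (hx : x ∈ Vl l.1),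
      bld τf x = ((((τf l : (V.restrictSub (Vl l.1)).orthGroup) :
          ↥(Vl l.1) ≃ₗ[R] ↥(Vl l.1)) ⟨x, hx⟩ : ↥(Vl l.1)) : V.carrier) := by
    intro τf l x hx
    suffices h : ∀ x' (hx' : x' ∈ Submodule.span R (typeSet l.1)),
        bld τf x' = ((((τf l : (V.restrictSub (Vl l.1)).orthGroup) :
          ↥(Vl l.1) ≃ₗ[R] ↥(Vl l.1)) ⟨x', (hspanT l.1).ge hx'⟩ : ↥(Vl l.1)) : V.carrier) by
      exact h x ((hspanT l.1).le hx)
    intro x' hx'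
    induction hx' using Submodule.span_induction with
    | mem b hbT =>
      have hbB : b ∈ V.base := hbT.1
      rw [hbld_base τf b hbB]
      have htfb : tf ⟨b, hbB⟩ = l := htfeq _ l hbT
      subst htfb
      rfl
    | zero =>
      rw [map_zero]
      have hz : (⟨(0 : V.carrier), (hspanT l.1).ge (Submodule.zero_mem _)⟩ : ↥(Vl l.1)) = 0 :=
        rfl
      rw [hz, map_zero]
      rfl
    | add x y hx1 hy1 ihx ihy =>
      rw [map_add, ihx, ihy]
      have hxy : (⟨x + y, (hspanT l.1).ge (Submodule.add_mem _ hx1 hy1)⟩ : ↥(Vl l.1)) =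
          ⟨x, (hspanT l.1).ge hx1⟩ + ⟨y, (hspanT l.1).ge hy1⟩ := rfl
      rw [hxy, map_add]
      rfl
    | smul a x hx1 ihx =>
      rw [map_smul, ihx]
      have hax : (⟨a • x, (hspanT l.1).ge (Submodule.smul_mem _ a hx1)⟩ : ↥(Vl l.1)) =
          a • ⟨x, (hspanT l.1).ge hx1⟩ := rfl
      rw [hax, map_smul]
      rfl
  have hbldcomp : ∀ τ1 τ2 : (∀ l : {l : Λ // Vl l ≠ ⊥},
      ((V.restrictSub (Vl l.1)).orthGroup : Type u)),
      (∀ l, τ2 l = (τ1 l)⁻¹) → (bld τ2).comp (bld τ1) = LinearMap.id := by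
    intro τ1 τ2 h12
    apply LinearMap.ext_on hBase.span_eq_top
    intro b hb
    show bld τ2 (bld τ1 b) = b
    rw [hbld_base τ1 b hb]
    set l := tf ⟨b, hb⟩ with hldef
    set v : ↥(Vl l.1) := ⟨b, hmemVl _ _ (htf ⟨b, hb⟩)⟩ with hvdef
    set w : ↥(Vl l.1) := ((τ1 l : (V.restrictSub (Vl l.1)).orthGroup) :
      ↥(Vl l.1) ≃ₗ[R] ↥(Vl l.1)) v with hwdef
    rw [hbld_on τ2 l (w : V.carrier) w.2, h12 l]
    show ((((τ1 l : (V.restrictSub (Vl l.1)).orthGroup) :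
      ↥(Vl l.1) ≃ₗ[R] ↥(Vl l.1)).symm w : ↥(Vl l.1)) : V.carrier) = b
    rw [hwdef, LinearEquiv.symm_apply_apply]
  have hΦsurj : Function.Surjective Φ := by
    intro τf
    have h1 : (bld (fun l => (τf l)⁻¹)).comp (bld τf) = LinearMap.id := by
      exact hbldcomp τf (fun l => (τf l)⁻¹) (fun l => rfl)
    have h2 : (bld τf).comp (bld (fun l => (τf l)⁻¹)) = LinearMap.id := by
      exact hbldcomp (fun l => (τf l)⁻¹) τf (fun l => (inv_inv _).symm)
    set σe : V.carrier ≃ₗ[R] V.carrier :=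
      LinearEquiv.ofLinear (bld τf) (bld (fun l => (τf l)⁻¹)) h2 h1 with hσedef
    have hσeapp : ∀ x, σe x = bld τf x := fun _ => rfl
    have hσb : ∀ x y, V.b (σe x) (σe y) = V.b x y := by
      intro x y
      obtain ⟨cx, hcx, -⟩ := hBase x
      obtain ⟨cy, hcy, -⟩ := hBase y
      set s := cx.support.image tf ∪ cy.support.image tf with hsdef
      have hxd : x = ∑ l ∈ s, xF cx l := by
        rw [hcx]
        exact hdecomp cx s Finset.subset_union_left
      have hyd : y = ∑ l ∈ s, xF cy l := by
        rw [hcy]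
        exact hdecomp cy s Finset.subset_union_right
      have hFx : σe x = ∑ l ∈ s, ((((τf l : (V.restrictSub (Vl l.1)).orthGroup) :
          ↥(Vl l.1) ≃ₗ[R] ↥(Vl l.1)) ⟨xF cx l, hxF_mem cx l⟩ : ↥(Vl l.1)) : V.carrier) := by
        rw [hσeapp, hxd, map_sum]
        exact Finset.sum_congr rfl fun l _ => hbld_on τf l (xF cx l) (hxF_mem cx l)
      have hFy : σe y = ∑ l ∈ s, ((((τf l : (V.restrictSub (Vl l.1)).orthGroup) :
          ↥(Vl l.1) ≃ₗ[R] ↥(Vl l.1)) ⟨xF cy l, hxF_mem cy l⟩ : ↥(Vl l.1)) : V.carrier) := by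
        rw [hσeapp, hyd, map_sum]
        exact Finset.sum_congr rfl fun l _ => hbld_on τf l (xF cy l) (hxF_mem cy l)
      calc V.b (σe x) (σe y)
          = ∑ l ∈ s, V.b ((((τf l : (V.restrictSub (Vl l.1)).orthGroup) :
              ↥(Vl l.1) ≃ₗ[R] ↥(Vl l.1)) ⟨xF cx l, hxF_mem cx l⟩ : ↥(Vl l.1)) : V.carrier)
            ((((τf l : (V.restrictSub (Vl l.1)).orthGroup) :
              ↥(Vl l.1) ≃ₗ[R] ↥(Vl l.1)) ⟨xF cy l, hxF_mem cy l⟩ : ↥(Vl l.1)) : V.carrier) := by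
            rw [hFx, hFy]
            exact hbsum s _ _ (fun l _ => Submodule.coe_mem _) (fun l _ => Submodule.coe_mem _)
        _ = ∑ l ∈ s, V.b (xF cx l) (xF cy l) :=
            Finset.sum_congr rfl fun l _ =>
              (τf l).2 ⟨xF cx l, hxF_mem cx l⟩ ⟨xF cy l, hxF_mem cy l⟩
        _ = V.b x y := by
            rw [← hbsum s _ _ (fun l _ => hxF_mem cx l) (fun l _ => hxF_mem cy l), ← hxd, ← hyd]
    refine ⟨⟨σe, hσb⟩, ?_⟩
    funext l
    refine Subtype.ext (LinearEquiv.ext fun v => Subtype.ext ?_)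
    have hcoe := hresE_coe ⟨σe, hσb⟩ l v
    rw [hΦapp, hcoe]
    show σe (v : V.carrier) = _
    rw [hσeapp, hbld_on τf l (v : V.carrier) v.2]
  exact ⟨MulEquiv.ofBijective Φ ⟨hΦinj, hΦsurj⟩, fun σ l x hx => hresE_coe σ l ⟨x, hx⟩⟩

end BModMain

/-- For a quadratic (resp. bilinear) `R`-module `V` with unique base,
every isometry `σ ∈ O(V)` preserves each isotypical component `V_l`, and restriction
gives a group isomorphism `O(V) ≅ Π_{l ∈ Λ'} O(V_l)`. -/
theorem orthogonal_group_product (R : Type u) [CommSemiring R] :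
    (∀ V : QMod R, V.Good →
      ∀ (Λ : Type u) (rep : Λ → QMod R),
        (∀ l, (rep l).Good ∧ (rep l).Indecomp) →
        (∀ l m, (rep l).Isom (rep m) → l = m) →
        (∀ C ∈ V.comps, ∃ l, (V.restrict C).Isom (rep l)) →
        ∀ Vl : Λ → Submodule R V.carrier,
          (∀ l, Vl l =
            Submodule.span R (⋃₀ {C | C ∈ V.comps ∧ (V.restrict C).Isom (rep l)})) →
          (∀ σ : V.carrier ≃ₗ[R] V.carrier, (∀ x, V.q (σ x) = V.q x) →
            ∀ l, Submodule.map σ.toLinearMap (Vl l) = Vl l) ∧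
          ∃ φ : V.orthGroup ≃*
              ((l : {l : Λ // Vl l ≠ ⊥}) → (V.restrictSub (Vl l.1)).orthGroup),
            ∀ (σ : V.orthGroup) (l : {l : Λ // Vl l ≠ ⊥}) (x : V.carrier) (hx : x ∈ Vl l.1),
              (((φ σ l :
                  (V.restrictSub (Vl l.1)).carrier ≃ₗ[R] (V.restrictSub (Vl l.1)).carrier)
                    ⟨x, hx⟩ : V.carrier) =
                (σ : V.carrier ≃ₗ[R] V.carrier) x)) ∧
    (∀ V : BMod R, V.Good →
      ∀ (Λ : Type u) (rep : Λ → BMod R),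
        (∀ l, (rep l).Good ∧ (rep l).Indecomp) →
        (∀ l m, (rep l).Isom (rep m) → l = m) →
        (∀ C ∈ V.comps, ∃ l, (V.restrict C).Isom (rep l)) →
        ∀ Vl : Λ → Submodule R V.carrier,
          (∀ l, Vl l =
            Submodule.span R (⋃₀ {C | C ∈ V.comps ∧ (V.restrict C).Isom (rep l)})) →
          (∀ σ : V.carrier ≃ₗ[R] V.carrier, (∀ x y, V.b (σ x) (σ y) = V.b x y) →
            ∀ l, Submodule.map σ.toLinearMap (Vl l) = Vl l) ∧
          ∃ φ : V.orthGroup ≃*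
              ((l : {l : Λ // Vl l ≠ ⊥}) → (V.restrictSub (Vl l.1)).orthGroup),
            ∀ (σ : V.orthGroup) (l : {l : Λ // Vl l ≠ ⊥}) (x : V.carrier) (hx : x ∈ Vl l.1),
              (((φ σ l :
                  (V.restrictSub (Vl l.1)).carrier ≃ₗ[R] (V.restrictSub (Vl l.1)).carrier)
                    ⟨x, hx⟩ : V.carrier) =
                (σ : V.carrier ≃ₗ[R] V.carrier) x)) := by
  constructor
  · intro V hG Λ rep h1 h2 h3 Vl hVl
    exact qmod_key V hG Λ rep h1 h2 h3 Vl hVl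
  · intro V hG Λ rep h1 h2 h3 Vl hVl
    exact bmod_key V hG Λ rep h1 h2 h3 Vl hVl
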